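/- Let Φ be a finite, nonidentically-zero, nonnegative measurable function on [0,∞), α > 0, and suppose ∫₀^r s^{−α−1} Φ(s) ds ≤ C r^{−α} Φ(r) holds for all r in an unbounded interval I ⊆ (0,∞). Then there exist constants c > 0 and r₀ such that Φ(r) ≥ c r^α for all r ≥ r₀. -/

import Mathlib

open MeasureTheory

/-- Let `Φ ≥ 0` be measurable (finite, not a.e. zero on `(0,∞)`), `α > 0`,
and suppose `∫₀^r s^{−α−1} Φ(s) ds ≤ C r^{−α} Φ(r)` for all `r` in an unbounded interval
`I ⊆ (0,∞)`. Then `Φ(r) ≥ c r^α` for some `c > 0` and all sufficiently large `r`. -/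
theorem statement5
    (Φ : ℝ → ℝ) (hΦmeas : Measurable Φ) (hΦ0 : ∀ s, 0 ≤ Φ s)
    (hΦne : ¬ (∀ᵐ s ∂(volume.restrict (Set.Ioi (0:ℝ))), Φ s = 0))
    (α C : ℝ) (hα : 0 < α) (hC : 0 < C)
    (I : Set ℝ) (hIconn : I.OrdConnected) (hIsub : I ⊆ Set.Ioi 0)
    (hIne : I.Nonempty) (hIunb : ¬ BddAbove I)
    (h : ∀ r ∈ I,
      ∫⁻ s in Set.Ioo 0 r, ENNReal.ofReal (s ^ (-α - 1) * Φ s) ≤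
        ENNReal.ofReal (C * (r ^ (-α) * Φ r))) :
    ∃ c > 0, ∃ r₀ : ℝ, ∀ r ≥ r₀, c * r ^ α ≤ Φ r := by
  set f : ℝ → ENNReal := fun s => ENNReal.ofReal (s ^ (-α - 1) * Φ s) with hfdef
  have hfm : Measurable f := by
    apply Measurable.ennreal_ofReal
    exact Measurable.mul (by fun_prop) hΦmeas
  -- the integral over (0, ∞) is positive
  have hpos : 0 < ∫⁻ s in Set.Ioi (0:ℝ), f s := by
    rcases eq_zero_or_pos (∫⁻ s in Set.Ioi (0:ℝ), f s) with h0 | h0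
    · exfalso
      apply hΦne
      have h1 := (lintegral_eq_zero_iff hfm).mp h0
      rw [Filter.EventuallyEq, ae_restrict_iff' measurableSet_Ioi] at h1
      rw [ae_restrict_iff' measurableSet_Ioi]
      filter_upwards [h1] with s hs
      intro hs0
      have h2 := hs hs0
      simp only [hfdef, Pi.zero_apply, ENNReal.ofReal_eq_zero] at h2
      have h3 : 0 < s ^ (-α - 1) := Real.rpow_pos_of_pos hs0 _
      nlinarith [hΦ0 s]
    · exact h0
  -- some truncated integral is positive
  have hexn : ∃ n : ℕ, 0 < ∫⁻ s in Set.Ioo (0:ℝ) n, f s := by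
    by_contra hcon
    push_neg at hcon
    simp only [le_zero_iff] at hcon
    have hU : Set.Ioi (0:ℝ) = ⋃ n : ℕ, Set.Ioo 0 (n:ℝ) := by
      ext x
      simp only [Set.mem_Ioi, Set.mem_iUnion, Set.mem_Ioo]
      constructor
      · intro hx
        obtain ⟨n, hn⟩ := exists_nat_gt x
        exact ⟨n, hx, hn⟩
      · rintro ⟨n, hx, _⟩; exact hx
    have : (∫⁻ s in Set.Ioi (0:ℝ), f s) = 0 := by
      rw [hU]
      refine le_antisymm ?_ (zero_le)
      calc ∫⁻ s in ⋃ n : ℕ, Set.Ioo (0:ℝ) (n:ℝ), f s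
          ≤ ∑' n : ℕ, ∫⁻ s in Set.Ioo (0:ℝ) (n:ℝ), f s := lintegral_iUnion_le _ _
        _ = 0 := by simp [hcon]
    exact hpos.ne' this
  obtain ⟨n, hn⟩ := hexn
  rw [not_bddAbove_iff] at hIunb
  obtain ⟨r₁, hr₁I, hr₁n⟩ := hIunb n
  have hIci : Set.Ici r₁ ⊆ I := by
    intro r hr
    obtain ⟨z, hzI, hrz⟩ := hIunb r
    exact hIconn.out hr₁I hzI ⟨hr, hrz.le⟩
  set ε : ENNReal := ∫⁻ s in Set.Ioo (0:ℝ) (n:ℝ), f s with hεdef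
  -- for all r ≥ r₁, ε ≤ ofReal (C * (r ^ (-α) * Φ r))
  have key : ∀ r ≥ r₁, ε ≤ ENNReal.ofReal (C * (r ^ (-α) * Φ r)) := by
    intro r hr
    have hrI : r ∈ I := hIci hr
    have hsub : Set.Ioo (0:ℝ) (n:ℝ) ⊆ Set.Ioo 0 r := by
      apply Set.Ioo_subset_Ioo le_rfl
      exact le_trans hr₁n.le hr
    calc ε ≤ ∫⁻ s in Set.Ioo (0:ℝ) r, f s := lintegral_mono_set hsub
      _ ≤ ENNReal.ofReal (C * (r ^ (-α) * Φ r)) := h r hrI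
  have hεfin : ε < ⊤ := lt_of_le_of_lt (key r₁ le_rfl) ENNReal.ofReal_lt_top
  have hεt : 0 < ε.toReal := ENNReal.toReal_pos hn.ne' hεfin.ne
  refine ⟨ε.toReal / C, div_pos hεt hC, r₁, fun r hr => ?_⟩
  have hr0 : 0 < r := lt_of_lt_of_le (hIsub hr₁I) hr
  have hrapos : 0 < r ^ α := Real.rpow_pos_of_pos hr0 α
  have h1 := key r hr
  have h2 : ε.toReal ≤ C * (r ^ (-α) * Φ r) := by
    have hnn : 0 ≤ C * (r ^ (-α) * Φ r) := by
      have hrn := Real.rpow_pos_of_pos hr0 (-α)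
      exact mul_nonneg hC.le (mul_nonneg hrn.le (hΦ0 r))
    calc ε.toReal ≤ (ENNReal.ofReal (C * (r ^ (-α) * Φ r))).toReal :=
          ENNReal.toReal_mono ENNReal.ofReal_ne_top h1
      _ = C * (r ^ (-α) * Φ r) := ENNReal.toReal_ofReal hnn
  rw [Real.rpow_neg hr0.le] at h2
  have h4 := mul_le_mul_of_nonneg_right h2 hrapos.le
  have h5 : C * ((r ^ α)⁻¹ * Φ r) * r ^ α = C * Φ r := by
    field_simp
  rw [h5] at h4
  rw [div_mul_eq_mul_div, div_le_iff₀ hC]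
  linarith
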